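/- Let K ⊆ K* ⊆ K** be fields such that the algebraic closure of K* equals K* ⊗_K \bar{K} (i.e. K*·\bar{K} is algebraically closed and K* is linearly disjoint from \bar{K} over K) and K**/K is a regular extension. Then K**/K* is a regular extension. -/

import Mathlib

open TensorProduct

section aux

variable (K K' K'' : Type) [Field K] [Field K'] [Field K'']
    [Algebra K K'] [Algebra K K''] [Algebra K' K''] [IsScalarTower K K' K'']

noncomputable def cancelHom :
    (K'' ⊗[K'] (K' ⊗[K] (AlgebraicClosure K))) →ₐ[K'] (K'' ⊗[K] (AlgebraicClosure K)) :=
  Algebra.TensorProduct.lift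
    (Algebra.TensorProduct.includeLeft)
    (Algebra.TensorProduct.map (Algebra.ofId K' K'') (AlgHom.id K (AlgebraicClosure K)))
    (fun x y => by exact mul_comm _ _)

lemma cancelHom_injective : Function.Injective (cancelHom K K' K'') := by
  -- construct a left inverse
  set L := AlgebraicClosure K
  have θ' : { θ : (K'' ⊗[K] L) →ₐ[K] (K'' ⊗[K'] (K' ⊗[K] L)) //
      ∀ (c : K'') (b : L), θ (c ⊗ₜ[K] b) = c ⊗ₜ[K'] ((1 : K') ⊗ₜ[K] b) } := by
    refine ⟨Algebra.TensorProduct.lift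
      ((Algebra.TensorProduct.includeLeft :
          K'' →ₐ[K'] K'' ⊗[K'] (K' ⊗[K] L)).restrictScalars K)
      ((Algebra.TensorProduct.includeRight :
          (K' ⊗[K] L) →ₐ[K'] K'' ⊗[K'] (K' ⊗[K] L)).restrictScalars K |>.comp
        (Algebra.TensorProduct.includeRight : L →ₐ[K] K' ⊗[K] L))
      (fun x y => by exact Commute.all (S := K'' ⊗[K'] (K' ⊗[K] L)) _ _), fun c b => ?_⟩
    simp [Algebra.TensorProduct.tmul_mul_tmul]
  obtain ⟨θ, hθ⟩ := θ'
  have key : ∀ x, θ (cancelHom K K' K'' x) = x := by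
    intro x
    induction x with
    | zero => simp
    | add a b ha hb => rw [map_add, map_add, ha, hb]
    | tmul c y =>
      induction y with
      | zero => simp
      | add a b ha hb =>
        rw [tmul_add, map_add, map_add, ha, hb]
      | tmul a b =>
        have h1 : cancelHom K K' K'' (c ⊗ₜ[K'] (a ⊗ₜ[K] b))
            = (c * algebraMap K' K'' a) ⊗ₜ[K] b := by
          erw [Algebra.TensorProduct.lift_tmul]
          simp [Algebra.ofId_apply, Algebra.TensorProduct.tmul_mul_tmul]
        rw [h1]
        rw [hθ]
        have h3 : c * algebraMap K' K'' a = a • c := by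
          rw [Algebra.smul_def, mul_comm]
        rw [h3, smul_tmul, smul_tmul', smul_eq_mul, mul_one]
  intro a b hab
  have := congrArg θ hab
  rwa [key, key] at this

end aux

/-- Let `K ⊆ K* ⊆ K**` be fields such that the algebraic closure of `K*` is isomorphic as a
`K*`-algebra to `K* ⊗[K] K̄`, and such that `K**/K` is regular (i.e. `K** ⊗[K] K̄` is a
domain).  Then `K**/K*` is regular, i.e. `K** ⊗[K*] (K*)̄ ` is a domain. -/
theorem stmt_4 (K K' K'' : Type) [Field K] [Field K'] [Field K'']
    [Algebra K K'] [Algebra K K''] [Algebra K' K'']  [IsScalarTower K K' K'']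
    (hclos : Nonempty ((AlgebraicClosure K') ≃ₐ[K'] (K' ⊗[K] (AlgebraicClosure K))))
    (hreg : IsDomain (K'' ⊗[K] (AlgebraicClosure K))) :
    IsDomain (K'' ⊗[K'] (AlgebraicClosure K')) := by
  obtain ⟨e⟩ := hclos
  let e₁ : (K'' ⊗[K'] (AlgebraicClosure K')) ≃ₐ[K'] (K'' ⊗[K'] (K' ⊗[K] (AlgebraicClosure K))) :=
    Algebra.TensorProduct.congr AlgEquiv.refl e
  have hinj : Function.Injective
      ((cancelHom K K' K'').toRingHom.comp e₁.toRingEquiv.toRingHom) :=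
    (cancelHom_injective K K' K'').comp e₁.injective
  exact hinj.isDomain _
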